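/- Let d ≥ 1 be an integer, r > 0, t ∈ (0,1), let 𝒳 be a standard Borel space, let I be a finite index set, and for each i ∈ I let κ_i and η_i be Markov kernels from [0, r] to 𝒳 such that for Lebesgue-almost every y ∈ [0, r], κ_i(y) ≠ η_i(y). Then for every ε > 0 and every V > 0 there exists γ > 0 such that for every Lebesgue-measurable set A contained in the closed Euclidean ball B(0, r) ⊆ ℝ^d with vol(A) ≥ V, the d-dimensional Lebesgue measure of the set {x ∈ A : φ_t(κ_i(‖x‖), η_i(‖x‖)) ≥ 1 − γ for some i ∈ I} is at most ε · vol(A). In particular, γ depends on A only through a lower bound on its volume. -/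

import Mathlib

open MeasureTheory

/-- The Hellinger-type integral `φ_t(P,Q) = ∫ (dP/dQ)^t dQ`. -/
noncomputable def phiT {𝒳 : Type*} [MeasurableSpace 𝒳] (t : ℝ) (P Q : Measure 𝒳) : ℝ :=
  ∫ x, (P.rnDeriv Q x).toReal ^ t ∂Q

lemma rpow_le_lin {t x : ℝ} (ht0 : 0 < t) (ht1 : t < 1) (hx : 0 ≤ x) :
    x ^ t ≤ t * x + (1 - t) := by
  have h := rpow_one_add_le_one_add_mul_self (s := x - 1) (by linarith) ht0.le ht1.le
  have hx1 : 1 + (x - 1) = x := by ring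
  rw [hx1] at h
  linarith

lemma rpow_lt_lin {t x : ℝ} (ht0 : 0 < t) (ht1 : t < 1) (hx : 0 ≤ x) (hx1 : x ≠ 1) :
    x ^ t < t * x + (1 - t) := by
  have h := rpow_one_add_lt_one_add_mul_self (s := x - 1) (by linarith)
    (by intro h; apply hx1; linarith) ht0 ht1
  have hx1' : 1 + (x - 1) = x := by ring
  rw [hx1'] at h
  linarith

lemma phiT_lt_one {𝒳 : Type*} [MeasurableSpace 𝒳] {t : ℝ} (ht0 : 0 < t) (ht1 : t < 1)
    (P Q : Measure 𝒳) [IsProbabilityMeasure P] [IsProbabilityMeasure Q] (hPQ : P ≠ Q) :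
    phiT t P Q < 1 := by
  set f : 𝒳 → ℝ := fun x => (P.rnDeriv Q x).toReal with hf
  have hf_meas : Measurable f := (Measure.measurable_rnDeriv P Q).ennreal_toReal
  have hf_nonneg : ∀ x, 0 ≤ f x := fun x => ENNReal.toReal_nonneg
  have hf_int : Integrable f Q := Measure.integrable_toReal_rnDeriv
  have hft_meas : Measurable fun x => f x ^ t := hf_meas.pow measurable_const
  have hft_int : Integrable (fun x => f x ^ t) Q := by
    refine Integrable.mono (hf_int.const_mul t |>.add (integrable_const (1 - t)))
      hft_meas.aestronglyMeasurable ?_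
    refine Filter.Eventually.of_forall fun x => ?_
    rw [Real.norm_of_nonneg (Real.rpow_nonneg (hf_nonneg x) t)]
    refine (rpow_le_lin ht0 ht1 (hf_nonneg x)).trans ?_
    have h1 : 0 ≤ t * f x + (1 - t) := by nlinarith [hf_nonneg x]
    calc t * f x + (1 - t) ≤ |t * f x + (1 - t)| := le_abs_self _
    _ = ‖t * f x + (1 - t)‖ := rfl
  have hint_le : ∫ x, f x ∂Q ≤ 1 := by
    have := Measure.integral_toReal_rnDeriv' (μ := P) (ν := Q)
    rw [hf]
    rw [this]
    simp only [measureReal_def, measure_univ, ENNReal.toReal_one]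
    have : 0 ≤ (P.singularPart Q Set.univ).toReal := ENNReal.toReal_nonneg
    linarith
  by_contra hcon
  push_neg at hcon
  -- hcon : 1 ≤ phiT t P Q
  set g : 𝒳 → ℝ := fun x => t * f x + (1 - t) - f x ^ t with hg
  have hg_nonneg : ∀ x, 0 ≤ g x := fun x => by
    have := rpow_le_lin ht0 ht1 (hf_nonneg x); simp only [hg]; linarith
  have hg_int : Integrable g Q := ((hf_int.const_mul t).add (integrable_const (1 - t))).sub hft_int
  have h1' : Integrable (fun x => t * f x + (1 - t)) Q :=
    (hf_int.const_mul t).add (integrable_const (1 - t))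
  have hg_integral : ∫ x, g x ∂Q ≤ 0 := by
    have heq : ∫ x, g x ∂Q = (∫ x, (t * f x + (1 - t)) ∂Q) - ∫ x, f x ^ t ∂Q :=
      integral_sub h1' hft_int
    have heq2 : ∫ x, (t * f x + (1 - t)) ∂Q = t * (∫ x, f x ∂Q) + (1 - t) := by
      rw [integral_add (hf_int.const_mul t) (integrable_const (1 - t)),
        integral_const_mul, integral_const]
      simp [measure_univ]
    have : (1:ℝ) ≤ ∫ x, f x ^ t ∂Q := hcon
    rw [heq, heq2]
    nlinarith
  have hg_zero : ∀ᵐ x ∂Q, g x = 0 := by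
    have h0 : ∫ x, g x ∂Q = 0 :=
      le_antisymm hg_integral (integral_nonneg hg_nonneg)
    exact (integral_eq_zero_iff_of_nonneg hg_nonneg hg_int).mp h0
  have hf_one : ∀ᵐ x ∂Q, f x = 1 := by
    filter_upwards [hg_zero] with x hx
    by_contra hne
    have := rpow_lt_lin ht0 ht1 (hf_nonneg x) hne
    simp only [hg] at hx
    linarith
  -- conclude P = Q
  have hrn_one : P.rnDeriv Q =ᵐ[Q] 1 := by
    filter_upwards [hf_one, P.rnDeriv_lt_top Q] with x hx hlt
    have : ((P.rnDeriv Q x).toReal : ℝ) = 1 := hx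
    have := (ENNReal.toReal_eq_one_iff _).mp this
    simpa using this
  have hwd : Q.withDensity (P.rnDeriv Q) = Q := by
    rw [withDensity_congr_ae hrn_one]
    simp
  have hdecomp := Measure.rnDeriv_add_singularPart P Q
  rw [hwd] at hdecomp
  have huniv : (1:ENNReal) + P.singularPart Q Set.univ = 1 + 0 := by
    have h := congrArg (fun m : Measure 𝒳 => m Set.univ) hdecomp
    simpa [Measure.coe_add, Pi.add_apply, measure_univ] using h
  have hsing : P.singularPart Q Set.univ = 0 :=
    (ENNReal.add_right_inj ENNReal.one_ne_top).mp huniv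
  have : P.singularPart Q = 0 := Measure.measure_univ_eq_zero.mp hsing
  apply hPQ
  rw [← hdecomp, this, add_zero]


lemma geom_bound (d : ℕ) (hd : 1 ≤ d) (r : ℝ) (hr : 0 < r)
    (B : Set ℝ) (hB : MeasurableSet B) (hBr : B ⊆ Set.Icc 0 r) :
    volume {x : EuclideanSpace ℝ (Fin d) | ‖x‖ ∈ B}
      ≤ ENNReal.ofReal (d * (volume (Metric.ball (0 : EuclideanSpace ℝ (Fin d)) 1)).toReal
          * r ^ (d - 1)) * volume B := by
  set E := EuclideanSpace ℝ (Fin d)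
  haveI : Nonempty (Fin d) := Fin.pos_iff_nonempty.mp hd
  haveI : Nontrivial E := inferInstanceAs (Nontrivial (PiLp 2 fun _ : Fin d => ℝ))
  set c : ℝ := (volume (Metric.ball (0 : E) 1)).toReal with hc
  have hc0 : 0 ≤ c := ENNReal.toReal_nonneg
  set T : Set E := {x : E | ‖x‖ ∈ B} with hT
  have hT_meas : MeasurableSet T := measurable_norm hB
  have hT_ball : T ⊆ Metric.closedBall 0 r := by
    intro x hx
    simp only [Metric.mem_closedBall, dist_zero_right]
    exact (hBr hx).2
  have hT_fin : volume T < ⊤ :=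
    lt_of_le_of_lt (measure_mono hT_ball) (MeasureTheory.measure_closedBall_lt_top)
  have hB_fin : volume B < ⊤ := by
    refine lt_of_le_of_lt (measure_mono hBr) ?_
    rw [Real.volume_Icc]
    exact ENNReal.ofReal_lt_top
  have hdim : Module.finrank ℝ E = d := finrank_euclideanSpace_fin
  -- integral formula
  have key := MeasureTheory.integral_fun_norm_addHaar (volume : Measure E)
    (B.indicator (fun _ => (1 : ℝ)))
  have hLHS : ∫ x : E, B.indicator (fun _ => (1:ℝ)) ‖x‖ ∂volume = (volume T).toReal := by
    have : ∀ x : E, B.indicator (fun _ => (1:ℝ)) ‖x‖ = T.indicator (fun _ => (1:ℝ)) x := by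
      intro x
      simp only [Set.indicator, hT, Set.mem_setOf_eq]
      rfl
    simp_rw [this]
    rw [integral_indicator hT_meas]
    simp [measure_lt_top]
    rfl
  rw [hLHS, hdim] at key
  -- RHS computation
  have hRHS : ∫ y in Set.Ioi (0:ℝ), y ^ (d - 1) • B.indicator (fun _ => (1:ℝ)) y
      = ∫ y in Set.Ioi (0:ℝ) ∩ B, y ^ (d - 1) := by
    have : ∀ y : ℝ, y ^ (d - 1) • B.indicator (fun _ => (1:ℝ)) y
        = B.indicator (fun y => y ^ (d - 1)) y := by
      intro y
      simp only [Set.indicator, smul_eq_mul]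
      by_cases hy : y ∈ B <;> simp [hy]
    simp_rw [this]
    rw [setIntegral_indicator hB]
  have hpow_int : IntegrableOn (fun y : ℝ => y ^ (d - 1)) (Set.Ioi 0 ∩ B) volume := by
    refine IntegrableOn.mono_set ?_ (fun y hy => (hBr hy.2 : y ∈ Set.Icc 0 r))
    exact (continuous_pow (d-1)).integrableOn_Icc
  have hconst_int : IntegrableOn (fun _ : ℝ => r ^ (d - 1)) (Set.Ioi 0 ∩ B) volume := by
    apply (integrableOn_const_iff (by finiteness)).mpr
    right
    refine lt_of_le_of_lt (measure_mono Set.inter_subset_right) hB_fin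
  have hmono : ∫ y in Set.Ioi (0:ℝ) ∩ B, y ^ (d - 1) ≤ ∫ y in Set.Ioi (0:ℝ) ∩ B, r ^ (d - 1) := by
    refine setIntegral_mono_on hpow_int hconst_int ((measurableSet_Ioi).inter hB) ?_
    intro y hy
    have h1 : 0 ≤ y := le_of_lt hy.1
    have h2 : y ≤ r := (hBr hy.2).2
    exact pow_le_pow_left₀ h1 h2 _
  have hconst_val : ∫ y in Set.Ioi (0:ℝ) ∩ B, (r ^ (d - 1) : ℝ)
      = (volume (Set.Ioi 0 ∩ B)).toReal * r ^ (d - 1) := by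
    rw [setIntegral_const, smul_eq_mul]
    rfl
  have hvol_le : (volume (Set.Ioi 0 ∩ B)).toReal ≤ (volume B).toReal := by
    apply ENNReal.toReal_mono hB_fin.ne
    exact measure_mono Set.inter_subset_right
  have hrpow : (0:ℝ) ≤ r ^ (d-1) := pow_nonneg hr.le _
  have hfinal : (volume T).toReal ≤ d * c * r ^ (d - 1) * (volume B).toReal := by
    rw [key, hRHS]
    have h1 : (d:ℝ) * c * (∫ y in Set.Ioi (0:ℝ) ∩ B, y ^ (d - 1))
        ≤ d * c * (r ^ (d-1) * (volume B).toReal) := by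
      have : ∫ y in Set.Ioi (0:ℝ) ∩ B, y ^ (d - 1) ≤ r ^ (d-1) * (volume B).toReal := by
        refine hmono.trans ?_
        rw [hconst_val]
        nlinarith
      have hd_c : (0:ℝ) ≤ (d:ℝ) * c := by positivity
      nlinarith
    calc (d : ℕ) • (c • ∫ y in Set.Ioi (0:ℝ) ∩ B, y ^ (d - 1))
        = (d:ℝ) * c * (∫ y in Set.Ioi (0:ℝ) ∩ B, y ^ (d - 1)) := by
          rw [nsmul_eq_mul, smul_eq_mul]; ring
      _ ≤ d * c * (r ^ (d-1) * (volume B).toReal) := h1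
      _ = d * c * r ^ (d - 1) * (volume B).toReal := by ring
  calc volume T = ENNReal.ofReal ((volume T).toReal) := (ENNReal.ofReal_toReal hT_fin.ne).symm
    _ ≤ ENNReal.ofReal (d * c * r ^ (d - 1) * (volume B).toReal) :=
        ENNReal.ofReal_le_ofReal hfinal
    _ = ENNReal.ofReal (d * c * r ^ (d - 1)) * ENNReal.ofReal ((volume B).toReal) := by
        rw [ENNReal.ofReal_mul (by positivity)]
    _ = ENNReal.ofReal (d * c * r ^ (d - 1)) * volume B := by
        rw [ENNReal.ofReal_toReal hB_fin.ne]

/-- Corollary 1 (distinguishing vertices): if for each `i` in a finite index set the Markov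
kernels `κ i` and `η i` from `[0,r]` satisfy `κ i y ≠ η i y` for Lebesgue-a.e. `y ∈ [0,r]`,
then for all `ε > 0` and `V > 0`, there is `γ > 0` such that for every measurable
`A ⊆ B(0,r) ⊆ ℝ^d` of volume at least `V`, the set of points `x ∈ A` where some
`φ_t(κ i ‖x‖, η i ‖x‖) ≥ 1 - γ` has volume at most `ε · vol(A)`. -/
theorem stmt_3 {𝒳 : Type*} [MeasurableSpace 𝒳] [StandardBorelSpace 𝒳]
    (d : ℕ) (hd : 1 ≤ d) (r t : ℝ) (hr : 0 < r) (ht : t ∈ Set.Ioo (0 : ℝ) 1)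
    {I : Type*} [Fintype I]
    (κ η : I → ProbabilityTheory.Kernel ℝ 𝒳)
    [∀ i, ProbabilityTheory.IsMarkovKernel (κ i)]
    [∀ i, ProbabilityTheory.IsMarkovKernel (η i)]
    (hne : ∀ i, ∀ᵐ y ∂(volume.restrict (Set.Icc (0 : ℝ) r)), κ i y ≠ η i y) :
    ∀ ε : ℝ, 0 < ε → ∀ V : ℝ, 0 < V → ∃ γ : ℝ, 0 < γ ∧
      ∀ A : Set (EuclideanSpace ℝ (Fin d)), MeasurableSet A →
        A ⊆ Metric.closedBall 0 r → ENNReal.ofReal V ≤ volume A →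
        volume {x ∈ A | ∃ i, 1 - γ ≤ phiT t (κ i ‖x‖) (η i ‖x‖)}
          ≤ ENNReal.ofReal ε * volume A := by
  obtain ⟨ht0, ht1⟩ := ht
  intro ε hε V hV
  classical
  -- measurable version of phiT along the kernels
  set G : I → ℝ → ℝ := fun i y =>
    ∫ x, (ProbabilityTheory.Kernel.rnDeriv (κ i) (η i) y x).toReal ^ t ∂(η i y) with hGdef
  have hG_meas : ∀ i, Measurable (G i) := by
    intro i
    have h1 : StronglyMeasurable
        (fun p : ℝ × 𝒳 => (ProbabilityTheory.Kernel.rnDeriv (κ i) (η i) p.1 p.2).toReal ^ t) :=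
      ((ProbabilityTheory.Kernel.measurable_rnDeriv (κ i) (η i)).ennreal_toReal.pow
        measurable_const).stronglyMeasurable
    exact (h1.integral_kernel_prod_right' (κ := η i)).measurable
  have hG_eq : ∀ i y, G i y = phiT t (κ i y) (η i y) := by
    intro i y
    refine integral_congr_ae ?_
    filter_upwards [ProbabilityTheory.Kernel.rnDeriv_eq_rnDeriv_measure
      (κ := κ i) (η := η i) (a := y)] with x hx
    rw [hx]
  -- constants
  set E := EuclideanSpace ℝ (Fin d)
  set K : ℝ := d * (volume (Metric.ball (0 : E) 1)).toReal * r ^ (d - 1) with hK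
  have hK0 : 0 ≤ K := by
    have : (0:ℝ) ≤ (volume (Metric.ball (0 : E) 1)).toReal := ENNReal.toReal_nonneg
    have : (0:ℝ) ≤ r ^ (d-1) := pow_nonneg hr.le _
    positivity
  set δ : ℝ := ε * V / (K + 1) with hδdef
  have hδ : 0 < δ := by positivity
  have hKδ : K * δ ≤ ε * V := by
    rw [hδdef]
    rw [mul_div_assoc']
    rw [div_le_iff₀ (by linarith)]
    nlinarith
  set nI : ℕ := Fintype.card I with hnI
  set δ' : ℝ := δ / (nI + 1) with hδ'def
  have hδ' : 0 < δ' := by positivity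
  -- bad sets in y
  set T : I → ℕ → Set ℝ := fun i n =>
    Set.Icc 0 r ∩ {y | 1 - ((n:ℝ) + 1)⁻¹ ≤ G i y} with hTdef
  have hT_meas : ∀ i n, MeasurableSet (T i n) := fun i n =>
    measurableSet_Icc.inter (measurableSet_le measurable_const (hG_meas i))
  have hT_anti : ∀ i, Antitone (T i) := by
    intro i n m hnm
    apply Set.inter_subset_inter_right
    intro y hy
    simp only [Set.mem_setOf_eq] at hy ⊢
    have hc : (n:ℝ) ≤ m := Nat.cast_le.mpr hnm
    have h1 : ((m:ℝ) + 1)⁻¹ ≤ ((n:ℝ)+1)⁻¹ := inv_anti₀ (by positivity) (by linarith)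
    linarith
  have hT_null : ∀ i, volume (⋂ n, T i n) = 0 := by
    intro i
    have hsub : (⋂ n, T i n) ⊆ {y | κ i y = η i y} ∩ Set.Icc 0 r := by
      intro y hy
      simp only [Set.mem_iInter, hTdef, Set.mem_inter_iff, Set.mem_setOf_eq] at hy
      have hyIcc : y ∈ Set.Icc (0:ℝ) r := (hy 0).1
      have hG1 : 1 ≤ G i y := by
        have htend : Filter.Tendsto (fun n : ℕ => 1 - ((n:ℝ) + 1)⁻¹)
            Filter.atTop (nhds 1) := by
          have := tendsto_one_div_add_atTop_nhds_zero_nat (𝕜 := ℝ)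
          simp only [one_div] at this
          simpa using Filter.Tendsto.const_sub 1 this
        exact le_of_tendsto' htend fun n => (hy n).2
      constructor
      · by_contra hne'
        have : phiT t (κ i y) (η i y) < 1 := phiT_lt_one ht0 ht1 _ _ hne'
        rw [← hG_eq i y] at this
        linarith
      · exact hyIcc
    refine measure_mono_null hsub ?_
    have h : volume.restrict (Set.Icc (0:ℝ) r) {y | κ i y = η i y} = 0 := by
      have h2 := hne i
      rw [ae_iff] at h2
      simpa only [ne_eq, not_not] using h2
    rwa [Measure.restrict_apply' measurableSet_Icc] at h
  have hT_fin : ∀ i, volume (T i 0) ≠ ⊤ := by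
    intro i
    refine ne_top_of_le_ne_top ?_ (measure_mono Set.inter_subset_left)
    rw [Real.volume_Icc]
    exact ENNReal.ofReal_ne_top
  have hT_tendsto : ∀ i, Filter.Tendsto (fun n => volume (T i n)) Filter.atTop (nhds 0) := by
    intro i
    have := tendsto_measure_iInter_atTop (μ := volume) (s := T i)
      (fun n => (hT_meas i n).nullMeasurableSet) (hT_anti i) ⟨0, hT_fin i⟩
    rwa [hT_null i] at this
  have hev : ∀ᶠ n in Filter.atTop, ∀ i, volume (T i n) < ENNReal.ofReal δ' := by
    rw [Filter.eventually_all]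
    intro i
    exact (hT_tendsto i).eventually_lt_const (by simp [ENNReal.ofReal_pos, hδ'])
  obtain ⟨N, hN⟩ := hev.exists
  refine ⟨((N:ℝ) + 1)⁻¹, by positivity, ?_⟩
  intro A hA hAball hAvol
  set B : Set ℝ := ⋃ i, T i N with hBdef
  have hB_meas : MeasurableSet B := MeasurableSet.iUnion fun i => hT_meas i N
  have hB_sub : B ⊆ Set.Icc 0 r := Set.iUnion_subset fun i => Set.inter_subset_left
  have hB_vol : volume B ≤ ENNReal.ofReal δ := by
    calc volume B ≤ ∑ i, volume (T i N) := measure_iUnion_fintype_le _ _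
      _ ≤ ∑ _i : I, ENNReal.ofReal δ' := Finset.sum_le_sum fun i _ => (hN i).le
      _ = nI • ENNReal.ofReal δ' := by rw [Finset.sum_const, Finset.card_univ]
      _ = ENNReal.ofReal (nI * δ') := by
          rw [nsmul_eq_mul, ← ENNReal.ofReal_natCast nI, ← ENNReal.ofReal_mul (by positivity)]
      _ ≤ ENNReal.ofReal δ := by
          apply ENNReal.ofReal_le_ofReal
          rw [hδ'def]
          rw [mul_div_assoc']
          rw [div_le_iff₀ (by positivity)]
          nlinarith
  -- bad set inclusion
  have hbad_sub : {x ∈ A | ∃ i, 1 - ((N:ℝ) + 1)⁻¹ ≤ phiT t (κ i ‖x‖) (η i ‖x‖)}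
      ⊆ {x : E | ‖x‖ ∈ B} := by
    rintro x ⟨hxA, i, hxi⟩
    have hxr : ‖x‖ ∈ Set.Icc (0:ℝ) r := by
      refine ⟨norm_nonneg x, ?_⟩
      have := hAball hxA
      simpa [Metric.mem_closedBall, dist_zero_right] using this
    refine Set.mem_setOf_eq ▸ Set.mem_iUnion.mpr ⟨i, hxr, ?_⟩
    simp only [Set.mem_setOf_eq]
    rw [hG_eq i ‖x‖]
    exact hxi
  calc volume {x ∈ A | ∃ i, 1 - ((N:ℝ) + 1)⁻¹ ≤ phiT t (κ i ‖x‖) (η i ‖x‖)}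
      ≤ volume {x : E | ‖x‖ ∈ B} := measure_mono hbad_sub
    _ ≤ ENNReal.ofReal K * volume B := geom_bound d hd r hr B hB_meas hB_sub
    _ ≤ ENNReal.ofReal K * ENNReal.ofReal δ := by
        gcongr
    _ = ENNReal.ofReal (K * δ) := (ENNReal.ofReal_mul hK0).symm
    _ ≤ ENNReal.ofReal (ε * V) := ENNReal.ofReal_le_ofReal hKδ
    _ = ENNReal.ofReal ε * ENNReal.ofReal V := ENNReal.ofReal_mul hε.le
    _ ≤ ENNReal.ofReal ε * volume A := by gcongr
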